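/- arXiv:2605.19648 — 3 statements merged into one kernel-verified Lean document; each statement's English description precedes it below -/
import Mathlib

section
/- Let f: {0,1}^d → [0,1] be monotone and let i ∈ [d]. Then ∑_{S ∋ i, |S| ≤ d_0} f̂(S)² ≤ (3^{d_0 - 1}/4) · I_i(f)^{3/2} for every positive integer d_0. -/
open Finset

/-- Expectation of `g` under the uniform measure on `{0,1}^d`. -/
noncomputable def unifE (d : ℕ) (g : (Fin d → Bool) → ℝ) : ℝ :=
  (∑ x : Fin d → Bool, g x) / 2 ^ d

/-- Discrete derivative `Δ_i f (x) = f(x^{i→1}) - f(x^{i→0})`. -/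
def disc (d : ℕ) (f : (Fin d → Bool) → ℝ) (i : Fin d) (x : Fin d → Bool) : ℝ :=
  f (Function.update x i true) - f (Function.update x i false)

/-- Coordinatewise monotone on the hypercube. -/
def BMono (d : ℕ) (f : (Fin d → Bool) → ℝ) : Prop :=
  ∀ x y : Fin d → Bool, (∀ i, x i ≤ y i) → f x ≤ f y

/-- Fourier character `χ_S(x) = ∏_{i∈S} (2 x_i - 1)`. -/
def chi (d : ℕ) (S : Finset (Fin d)) (x : Fin d → Bool) : ℝ :=
  ∏ i ∈ S, (if x i then (1 : ℝ) else -1)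

/-- Fourier coefficient `f̂(S) = E[f(X) χ_S(X)]`. -/
noncomputable def fhat (d : ℕ) (f : (Fin d → Bool) → ℝ) (S : Finset (Fin d)) : ℝ :=
  unifE d (fun x => f x * chi d S x)

section Aux

variable {d : ℕ}

lemma flip_invol (j : Fin d) :
    Function.Involutive (fun x : Fin d → Bool => Function.update x j (! x j)) := by
  intro x
  simp [Function.update_idem]

/-- Split the sum over the hypercube according to coordinate `j`. -/
lemma sum_update (g : (Fin d → Bool) → ℝ) (j : Fin d) :
    ∑ x : Fin d → Bool, g x =
      (∑ x : Fin d → Bool,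
        (g (Function.update x j true) + g (Function.update x j false))) / 2 := by
  have hb := (flip_invol (d := d) j).bijective
  have h1 : ∑ x : Fin d → Bool, g (Function.update x j (! x j)) =
      ∑ x : Fin d → Bool, g x := Function.Bijective.sum_comp hb g
  have h2 : ∀ x : Fin d → Bool,
      g (Function.update x j true) + g (Function.update x j false) =
        g x + g (Function.update x j (! x j)) := by
    intro x
    cases hx : x j
    · have h : Function.update x j false = x := by
        rw [← hx]; exact Function.update_eq_self j x
      simp only [hx, Bool.not_false, h]
      ring
    · have h : Function.update x j true = x := by
        rw [← hx]; exact Function.update_eq_self j x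
      simp only [hx, Bool.not_true, h]
  rw [Finset.sum_congr rfl (fun x _ => h2 x), Finset.sum_add_distrib, h1]
  ring

lemma chi_update_notMem {T : Finset (Fin d)} {j : Fin d} (hj : j ∉ T)
    (x : Fin d → Bool) (b : Bool) :
    chi d T (Function.update x j b) = chi d T x := by
  unfold chi
  refine Finset.prod_congr rfl fun k hk => ?_
  rw [Function.update_of_ne (by rintro rfl; exact hj hk)]

lemma chi_insert {T : Finset (Fin d)} {j : Fin d} (hj : j ∉ T) (x : Fin d → Bool) :
    chi d (insert j T) x = (if x j then (1 : ℝ) else -1) * chi d T x := by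
  unfold chi
  exact Finset.prod_insert hj

lemma unifE_mono {u v : (Fin d → Bool) → ℝ} (h : ∀ x, u x ≤ v x) :
    unifE d u ≤ unifE d v := by
  unfold unifE
  exact (div_le_div_iff_of_pos_right (by positivity)).mpr (Finset.sum_le_sum fun x _ => h x)

lemma unifE_nonneg {u : (Fin d → Bool) → ℝ} (h : ∀ x, 0 ≤ u x) :
    0 ≤ unifE d u :=
  div_nonneg (Finset.sum_nonneg fun x _ => h x) (by positivity)

lemma unifE_add (u v : (Fin d → Bool) → ℝ) :
    unifE d (fun x => u x + v x) = unifE d u + unifE d v := by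
  unfold unifE
  rw [Finset.sum_add_distrib, add_div]

lemma unifE_const_mul (a : ℝ) (u : (Fin d → Bool) → ℝ) :
    unifE d (fun x => a * u x) = a * unifE d u := by
  unfold unifE
  rw [← Finset.mul_sum, mul_div_assoc]

lemma unifE_sum {κ : Type*} (s : Finset κ) (F : κ → (Fin d → Bool) → ℝ) :
    unifE d (fun x => ∑ T ∈ s, F T x) = ∑ T ∈ s, unifE d (F T) := by
  unfold unifE
  rw [Finset.sum_comm, Finset.sum_div]

lemma unifE_const (c : ℝ) : unifE d (fun _ => c) = c := by
  unfold unifE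
  rw [Finset.sum_const, Finset.card_univ]
  simp [Fintype.card_fun]

/-- Cauchy–Schwarz for the uniform expectation. -/
lemma unifE_CS (u v : (Fin d → Bool) → ℝ) :
    (unifE d (fun x => u x * v x)) ^ 2 ≤
      unifE d (fun x => u x ^ 2) * unifE d (fun x => v x ^ 2) := by
  unfold unifE
  rw [div_pow, div_mul_div_comm,
    show ((2 : ℝ) ^ d * 2 ^ d) = ((2 : ℝ) ^ d) ^ 2 by ring]
  exact (div_le_div_iff_of_pos_right (by positivity)).mpr (Finset.sum_mul_sq_le_sq_mul_sq _ _ _)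

/-- (2,4)-hypercontractivity, in coefficient form: if
`u = ∑_{T ⊆ K} c T · χ_T`, then `E[u⁴] ≤ (∑_{T ⊆ K} 3^|T| c T²)²`. -/
lemma hyp4 (K : Finset (Fin d)) : ∀ c : Finset (Fin d) → ℝ,
    unifE d (fun x => (∑ T ∈ K.powerset, c T * chi d T x) ^ 4) ≤
      (∑ T ∈ K.powerset, (3 : ℝ) ^ T.card * c T ^ 2) ^ 2 := by
  induction K using Finset.induction_on with
  | empty =>
      intro c
      simp only [Finset.powerset_empty, Finset.sum_singleton, Finset.card_empty, pow_zero,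
        one_mul, chi, Finset.prod_empty, mul_one]
      rw [unifE_const]
      nlinarith [sq_nonneg (c ∅)]
  | @insert j K' hj ih =>
      intro c
      set A : (Fin d → Bool) → ℝ := fun x => ∑ T ∈ K'.powerset, c T * chi d T x with hA
      set B : (Fin d → Bool) → ℝ :=
        fun x => ∑ T ∈ K'.powerset, c (insert j T) * chi d T x with hB
      have hjP : ∀ T ∈ K'.powerset, j ∉ T := by
        intro T hT hjT
        exact hj (Finset.mem_powerset.mp hT hjT)
      have hdisj : Disjoint K'.powerset (K'.powerset.image (insert j)) := by
        rw [Finset.disjoint_left]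
        intro T hT hT'
        obtain ⟨T', hT', rfl⟩ := Finset.mem_image.mp hT'
        exact hjP _ hT (Finset.mem_insert_self j T')
      have hinj : ∀ T ∈ K'.powerset, ∀ T' ∈ K'.powerset,
          insert j T = insert j T' → T = T' := by
        intro T hT T' hT' h
        rw [← Finset.erase_insert (hjP T hT), h, Finset.erase_insert (hjP T' hT')]
      -- decomposition of the sum
      have hdecomp : ∀ x : Fin d → Bool,
          (∑ T ∈ (insert j K').powerset, c T * chi d T x) =
            A x + (if x j then (1 : ℝ) else -1) * B x := by
        intro x
        rw [Finset.powerset_insert, Finset.sum_union hdisj, Finset.sum_image hinj]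
        congr 1
        rw [Finset.mul_sum]
        refine Finset.sum_congr rfl fun T hT => ?_
        rw [chi_insert (hjP T hT)]
        ring
      -- invariance of A and B under updating coordinate j
      have hAinv : ∀ (x : Fin d → Bool) (b : Bool), A (Function.update x j b) = A x := by
        intro x b
        refine Finset.sum_congr rfl fun T hT => ?_
        rw [chi_update_notMem (hjP T hT)]
      have hBinv : ∀ (x : Fin d → Bool) (b : Bool), B (Function.update x j b) = B x := by
        intro x b
        refine Finset.sum_congr rfl fun T hT => ?_
        rw [chi_update_notMem (hjP T hT)]
      -- rewrite the fourth moment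
      have hmoment : unifE d (fun x => (∑ T ∈ (insert j K').powerset, c T * chi d T x) ^ 4) =
          unifE d (fun x => A x ^ 4 + 6 * (A x ^ 2 * B x ^ 2) + B x ^ 4) := by
        unfold unifE
        congr 1
        rw [sum_update (fun x => (∑ T ∈ (insert j K').powerset, c T * chi d T x) ^ 4) j]
        have hpt : ∀ x : Fin d → Bool,
            (∑ T ∈ (insert j K').powerset, c T * chi d T (Function.update x j true)) ^ 4 +
              (∑ T ∈ (insert j K').powerset, c T * chi d T (Function.update x j false)) ^ 4 =
              2 * (A x ^ 4 + 6 * (A x ^ 2 * B x ^ 2) + B x ^ 4) := by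
          intro x
          rw [hdecomp, hdecomp, hAinv, hBinv, hAinv, hBinv]
          simp [Function.update_self]
          ring
        rw [Finset.sum_congr rfl fun x _ => hpt x, ← Finset.mul_sum,
          mul_div_cancel_left₀ _ (by norm_num : (2 : ℝ) ≠ 0)]
      set α : ℝ := ∑ T ∈ K'.powerset, (3 : ℝ) ^ T.card * c T ^ 2 with hα
      set β : ℝ := ∑ T ∈ K'.powerset, (3 : ℝ) ^ T.card * c (insert j T) ^ 2 with hβ
      have hαnn : 0 ≤ α := Finset.sum_nonneg fun T _ => by positivity
      have hβnn : 0 ≤ β := Finset.sum_nonneg fun T _ => by positivity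
      have hA4 : unifE d (fun x => A x ^ 4) ≤ α ^ 2 := ih c
      have hB4 : unifE d (fun x => B x ^ 4) ≤ β ^ 2 := ih (fun T => c (insert j T))
      have hABnn : 0 ≤ unifE d (fun x => A x ^ 2 * B x ^ 2) :=
        unifE_nonneg fun x => by positivity
      have hAB : unifE d (fun x => A x ^ 2 * B x ^ 2) ≤ α * β := by
        have hcs := unifE_CS (fun x => A x ^ 2) (fun x => B x ^ 2)
        have h1 : unifE d (fun x => (A x ^ 2) ^ 2) = unifE d (fun x => A x ^ 4) := by
          congr 1; funext x; ring
        have h2 : unifE d (fun x => (B x ^ 2) ^ 2) = unifE d (fun x => B x ^ 4) := by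
          congr 1; funext x; ring
        rw [h1, h2] at hcs
        have hA4nn : 0 ≤ unifE d (fun x => A x ^ 4) :=
          unifE_nonneg fun x => by positivity
        have hB4nn : 0 ≤ unifE d (fun x => B x ^ 4) :=
          unifE_nonneg fun x => by positivity
        have hprod : (unifE d fun x => A x ^ 4) * (unifE d fun x => B x ^ 4) ≤
            α ^ 2 * β ^ 2 :=
          mul_le_mul hA4 hB4 hB4nn (by positivity)
        nlinarith [hcs, hABnn, hprod, mul_nonneg hαnn hβnn]
      -- right-hand side
      have hRHS : ∑ T ∈ (insert j K').powerset, (3 : ℝ) ^ T.card * c T ^ 2 = α + 3 * β := by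
        rw [Finset.powerset_insert, Finset.sum_union hdisj, Finset.sum_image hinj]
        congr 1
        rw [Finset.mul_sum]
        refine Finset.sum_congr rfl fun T hT => ?_
        rw [Finset.card_insert_of_notMem (hjP T hT), pow_succ]
        ring
      rw [hmoment, hRHS]
      have hsplit : unifE d (fun x => A x ^ 4 + 6 * (A x ^ 2 * B x ^ 2) + B x ^ 4) =
          unifE d (fun x => A x ^ 4) + 6 * unifE d (fun x => A x ^ 2 * B x ^ 2) +
            unifE d (fun x => B x ^ 4) := by
        rw [unifE_add, unifE_add, unifE_const_mul]
      rw [hsplit]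
      nlinarith [hA4, hB4, hAB, hαnn, hβnn, sq_nonneg β]

end Aux

set_option maxHeartbeats 1000000 in
theorem stmt11 (d : ℕ) (f : (Fin d → Bool) → ℝ)
    (hf : ∀ x, f x ∈ Set.Icc (0 : ℝ) 1) (hmono : BMono d f)
    (i : Fin d) (d0 : ℕ) (hd0 : 1 ≤ d0) :
    (∑ S ∈ Finset.univ.filter (fun S : Finset (Fin d) => i ∈ S ∧ S.card ≤ d0),
        (fhat d f S) ^ 2) ≤
      ((3 : ℝ) ^ (d0 - 1) / 4) * (unifE d (fun x => disc d f i x)) ^ ((3 : ℝ) / 2) := by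
  set g : (Fin d → Bool) → ℝ := fun x => disc d f i x with hg
  -- basic bounds on g
  have hg01 : ∀ x, 0 ≤ g x ∧ g x ≤ 1 := by
    intro x
    constructor
    · have := hmono (Function.update x i false) (Function.update x i true) ?_
      · simpa [hg, disc] using this
      · intro k
        by_cases hk : k = i
        · subst hk; simp
        · simp [Function.update_of_ne hk]
    · have h1 := (hf (Function.update x i true)).2
      have h2 := (hf (Function.update x i false)).1
      simp only [hg, disc]
      linarith
  set I : ℝ := unifE d g with hI
  have hInn : 0 ≤ I := unifE_nonneg fun x => (hg01 x).1
  set W : ℝ := ∑ T : Finset (Fin d), (1 / 3 : ℝ) ^ T.card * (fhat d g T) ^ 2 with hW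
  have hWnn : 0 ≤ W := Finset.sum_nonneg fun T _ => by positivity
  -- the smoothed function h
  set h : (Fin d → Bool) → ℝ :=
    fun x => ∑ T : Finset (Fin d), (1 / 3 : ℝ) ^ T.card * fhat d g T * chi d T x with hh
  -- (a) E[g h] = W
  have hgh : unifE d (fun x => g x * h x) = W := by
    have hfe : (fun x => g x * h x) =
        fun x => ∑ T : Finset (Fin d), (1 / 3 : ℝ) ^ T.card * fhat d g T * (g x * chi d T x) := by
      funext x
      simp only [hh, Finset.mul_sum]
      exact Finset.sum_congr rfl fun T _ => by ring
    rw [hfe, unifE_sum, hW]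
    refine Finset.sum_congr rfl fun T _ => ?_
    rw [unifE_const_mul]
    unfold fhat
    ring
  -- (b) E[h⁴] ≤ W²
  have hh4 : unifE d (fun x => h x ^ 4) ≤ W ^ 2 := by
    have key : ∀ n : ℕ, (3 : ℝ) ^ n * ((1 / 3 : ℝ) ^ n) ^ 2 = (1 / 3 : ℝ) ^ n := by
      intro n
      rw [one_div, inv_pow, sq, ← mul_assoc,
        mul_inv_cancel₀ (by positivity : ((3 : ℝ) ^ n) ≠ 0), one_mul]
    have h0 : unifE d (fun x =>
        (∑ T : Finset (Fin d), (1 / 3 : ℝ) ^ T.card * fhat d g T * chi d T x) ^ 4) ≤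
        (∑ T : Finset (Fin d),
          (3 : ℝ) ^ T.card * ((1 / 3 : ℝ) ^ T.card * fhat d g T) ^ 2) ^ 2 := by
      simpa only [Finset.powerset_univ] using
        hyp4 (Finset.univ : Finset (Fin d)) (fun T => (1 / 3 : ℝ) ^ T.card * fhat d g T)
    have heq : ∑ T : Finset (Fin d),
        (3 : ℝ) ^ T.card * ((1 / 3 : ℝ) ^ T.card * fhat d g T) ^ 2 = W := by
      rw [hW]
      refine Finset.sum_congr rfl fun T _ => ?_
      rw [mul_pow, ← mul_assoc, key T.card]
    rw [heq] at h0
    simpa only [hh] using h0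
  -- (c) W ≤ I^(3/2)
  have hWI : W ≤ I ^ ((3 : ℝ) / 2) := by
    have hgsq : unifE d (fun x => g x ^ 2) ≤ I := by
      rw [hI]
      refine unifE_mono fun x => ?_
      have := hg01 x
      nlinarith [this.1, this.2]
    -- CS 1 : W² ≤ I * E[g h²]
    have hcs1 : W ^ 2 ≤ I * unifE d (fun x => g x * h x ^ 2) := by
      have := unifE_CS (fun x => Real.sqrt (g x)) (fun x => Real.sqrt (g x) * h x)
      have e1 : (fun x => Real.sqrt (g x) * (Real.sqrt (g x) * h x)) =
          fun x => g x * h x := by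
        funext x
        rw [← mul_assoc, Real.mul_self_sqrt (hg01 x).1]
      have e2 : (fun x => Real.sqrt (g x) ^ 2) = g := by
        funext x
        rw [Real.sq_sqrt (hg01 x).1]
      have e3 : (fun x => (Real.sqrt (g x) * h x) ^ 2) = fun x => g x * h x ^ 2 := by
        funext x
        rw [mul_pow, Real.sq_sqrt (hg01 x).1]
      rw [e1, e2, e3] at this
      rw [hgh] at this
      rw [hI]
      exact this
    -- CS 2 : (E[g h²])² ≤ I * W²
    have hcs2 : (unifE d (fun x => g x * h x ^ 2)) ^ 2 ≤ I * W ^ 2 := by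
      have := unifE_CS g (fun x => h x ^ 2)
      have e3 : (fun x => (h x ^ 2) ^ 2) = fun x => h x ^ 4 := by
        funext x; ring
      rw [e3] at this
      calc (unifE d (fun x => g x * h x ^ 2)) ^ 2
          ≤ unifE d (fun x => g x ^ 2) * unifE d (fun x => h x ^ 4) := this
        _ ≤ I * W ^ 2 := by
            have h4nn : 0 ≤ unifE d (fun x => h x ^ 4) :=
              unifE_nonneg fun x => by positivity
            have hgsqnn : 0 ≤ unifE d (fun x => g x ^ 2) :=
              unifE_nonneg fun x => by positivity
            nlinarith [hgsq, hh4, hInn]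
    have hghsqnn : 0 ≤ unifE d (fun x => g x * h x ^ 2) :=
      unifE_nonneg fun x => mul_nonneg (hg01 x).1 (by positivity)
    -- conclude W² ≤ I³
    have hW2 : W ^ 2 ≤ I ^ 3 := by
      rcases eq_or_lt_of_le hWnn with hW0 | hWpos
      · rw [← hW0]
        rw [show ((0 : ℝ)) ^ 2 = 0 by ring]
        exact pow_nonneg hInn 3
      · have e1 : W ^ 2 * W ^ 2 ≤
            (I * unifE d (fun x => g x * h x ^ 2)) * (I * unifE d (fun x => g x * h x ^ 2)) :=
          mul_le_mul hcs1 hcs1 (sq_nonneg W) (mul_nonneg hInn hghsqnn)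
        have e3 : I ^ 2 * (unifE d (fun x => g x * h x ^ 2)) ^ 2 ≤ I ^ 2 * (I * W ^ 2) :=
          mul_le_mul_of_nonneg_left hcs2 (sq_nonneg I)
        have h4 : W ^ 2 * W ^ 2 ≤ I ^ 3 * W ^ 2 := by nlinarith [e1, e3]
        exact le_of_mul_le_mul_right h4 (pow_pos hWpos 2)
    -- convert
    have hrw : I ^ ((3 : ℝ) / 2) = Real.sqrt (I ^ 3) := by
      rw [show ((3 : ℝ) / 2) = ((3 : ℕ) : ℝ) * (1 / 2 : ℝ) by push_cast; norm_num,
        Real.rpow_mul hInn, Real.rpow_natCast, ← Real.sqrt_eq_rpow]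
    rw [hrw]
    calc W = Real.sqrt (W ^ 2) := by rw [Real.sqrt_sq hWnn]
      _ ≤ Real.sqrt (I ^ 3) := Real.sqrt_le_sqrt hW2
  -- (d) LHS ≤ (3^(d0-1)/4) * W
  have hfg : ∀ T : Finset (Fin d), i ∉ T →
      fhat d f (insert i T) = fhat d g T / 2 := by
    intro T hiT
    unfold fhat unifE
    rw [sum_update (fun x => f x * chi d (insert i T) x) i]
    have : ∀ x : Fin d → Bool,
        f (Function.update x i true) * chi d (insert i T) (Function.update x i true) +
          f (Function.update x i false) * chi d (insert i T) (Function.update x i false) =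
          g x * chi d T x := by
      intro x
      rw [chi_insert hiT, chi_insert hiT, chi_update_notMem hiT, chi_update_notMem hiT]
      simp only [hg, disc, Function.update_self]
      simp
      ring
    rw [Finset.sum_congr rfl fun x _ => this x]
    ring
  have hLHS : (∑ S ∈ Finset.univ.filter (fun S : Finset (Fin d) => i ∈ S ∧ S.card ≤ d0),
      (fhat d f S) ^ 2) ≤ ((3 : ℝ) ^ (d0 - 1) / 4) * W := by
    have hre : (∑ S ∈ Finset.univ.filter (fun S : Finset (Fin d) => i ∈ S ∧ S.card ≤ d0),
        (fhat d f S) ^ 2) =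
        ∑ T ∈ Finset.univ.filter (fun T : Finset (Fin d) => i ∉ T ∧ T.card + 1 ≤ d0),
          (fhat d g T) ^ 2 / 4 := by
      refine Finset.sum_nbij' (fun S => S.erase i) (fun T => insert i T) ?_ ?_ ?_ ?_ ?_
      · intro S hS
        simp only [Finset.mem_filter, Finset.mem_univ, true_and] at hS ⊢
        refine ⟨Finset.notMem_erase i S, ?_⟩
        rw [Finset.card_erase_of_mem hS.1]
        omega
      · intro T hT
        simp only [Finset.mem_filter, Finset.mem_univ, true_and] at hT ⊢
        refine ⟨Finset.mem_insert_self i T, ?_⟩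
        rw [Finset.card_insert_of_notMem hT.1]
        exact hT.2
      · intro S hS
        simp only [Finset.mem_filter, Finset.mem_univ, true_and] at hS
        exact Finset.insert_erase hS.1
      · intro T hT
        simp only [Finset.mem_filter, Finset.mem_univ, true_and] at hT
        exact Finset.erase_insert hT.1
      · intro S hS
        simp only [Finset.mem_filter, Finset.mem_univ, true_and] at hS
        rw [show S = insert i (S.erase i) from (Finset.insert_erase hS.1).symm]
        rw [hfg _ (Finset.notMem_erase i S)]
        simp only [Finset.erase_insert (Finset.notMem_erase i S)]
        ring
    rw [hre]
    have hterm : ∀ T ∈ Finset.univ.filter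
        (fun T : Finset (Fin d) => i ∉ T ∧ T.card + 1 ≤ d0),
        (fhat d g T) ^ 2 / 4 ≤
          ((3 : ℝ) ^ (d0 - 1) / 4) * ((1 / 3 : ℝ) ^ T.card * (fhat d g T) ^ 2) := by
      intro T hT
      simp only [Finset.mem_filter, Finset.mem_univ, true_and] at hT
      have hcard : T.card ≤ d0 - 1 := by omega
      have hge : (1 : ℝ) ≤ (3 : ℝ) ^ (d0 - 1) * (1 / 3 : ℝ) ^ T.card := by
        rw [div_pow, one_pow, mul_one_div, le_div_iff₀ (by positivity), one_mul]
        exact pow_le_pow_right₀ (by norm_num) hcard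
      have h2 := mul_le_mul_of_nonneg_right hge (sq_nonneg (fhat d g T))
      rw [one_mul] at h2
      nlinarith [h2]
    calc (∑ T ∈ Finset.univ.filter (fun T : Finset (Fin d) => i ∉ T ∧ T.card + 1 ≤ d0),
          (fhat d g T) ^ 2 / 4)
        ≤ ∑ T ∈ Finset.univ.filter (fun T : Finset (Fin d) => i ∉ T ∧ T.card + 1 ≤ d0),
            ((3 : ℝ) ^ (d0 - 1) / 4) * ((1 / 3 : ℝ) ^ T.card * (fhat d g T) ^ 2) :=
          Finset.sum_le_sum hterm
      _ ≤ ∑ T : Finset (Fin d),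
            ((3 : ℝ) ^ (d0 - 1) / 4) * ((1 / 3 : ℝ) ^ T.card * (fhat d g T) ^ 2) := by
          refine Finset.sum_le_sum_of_subset_of_nonneg (Finset.filter_subset _ _) ?_
          intro T _ _
          positivity
      _ = ((3 : ℝ) ^ (d0 - 1) / 4) * W := by
          rw [hW, ← Finset.mul_sum]
  calc (∑ S ∈ Finset.univ.filter (fun S : Finset (Fin d) => i ∈ S ∧ S.card ≤ d0),
        (fhat d f S) ^ 2)
      ≤ ((3 : ℝ) ^ (d0 - 1) / 4) * W := hLHS
    _ ≤ ((3 : ℝ) ^ (d0 - 1) / 4) * I ^ ((3 : ℝ) / 2) := by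
        apply mul_le_mul_of_nonneg_left hWI (by positivity)
end

section
/- Let f: {0,1}^d → [0,1] be monotone with I(f) ≤ K. For any integer d_0 ≥ 1 and δ > 0, set J := {i : I_i(f) ≥ δ} and 𝒮 := {S ⊆ J : |S| ≤ d_0}. Then ∑_{S ∉ 𝒮} f̂(S)² ≤ I^{(2)}(f)/(4 d_0) + K · 3^{d_0} · δ^{1/2} / 12. -/
open Finset
open scoped symmDiff

/-! ### auxiliary -/

def bflip (d : ℕ) (n : Fin d) (x : Fin d → Bool) : Fin d → Bool :=
  Function.update x n (!(x n))

def eps (d : ℕ) (n : Fin d) (x : Fin d → Bool) : ℝ := if x n then 1 else -1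

variable {d : ℕ}

lemma bflip_invol (n : Fin d) : Function.Involutive (bflip d n) := by
  intro x
  funext j
  by_cases h : j = n
  · subst h; simp [bflip]
  · simp [bflip, Function.update_of_ne h]

lemma bflip_apply_self (n : Fin d) (x : Fin d → Bool) : bflip d n x n = !(x n) := by
  simp [bflip]

lemma bflip_apply_ne (n j : Fin d) (x : Fin d → Bool) (h : j ≠ n) :
    bflip d n x j = x j := by simp [bflip, Function.update_of_ne h]

lemma sum_bflip (n : Fin d) (F : (Fin d → Bool) → ℝ) :
    ∑ x : Fin d → Bool, F (bflip d n x) = ∑ x : Fin d → Bool, F x :=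
  Fintype.sum_bijective _ (bflip_invol n).bijective _ _ (fun _ => rfl)

lemma eps_bflip (n : Fin d) (x : Fin d → Bool) : eps d n (bflip d n x) = - eps d n x := by
  simp only [eps, bflip_apply_self]
  cases x n <;> simp

lemma chi_bflip_not_mem {S : Finset (Fin d)} {n : Fin d} (h : n ∉ S) (x : Fin d → Bool) :
    chi d S (bflip d n x) = chi d S x := by
  unfold chi
  refine Finset.prod_congr rfl fun j hj => ?_
  rw [bflip_apply_ne n j x (fun e => h (e ▸ hj))]

lemma chi_insert_s12 {S : Finset (Fin d)} {n : Fin d} (h : n ∉ S) (x : Fin d → Bool) :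
    chi d (insert n S) x = eps d n x * chi d S x := by
  unfold chi
  rw [Finset.prod_insert h]; rfl

lemma chi_bflip_mem {S : Finset (Fin d)} {n : Fin d} (h : n ∈ S) (x : Fin d → Bool) :
    chi d S (bflip d n x) = - chi d S x := by
  have h1 : S = insert n (S.erase n) := (Finset.insert_erase h).symm
  rw [h1, chi_insert_s12 (Finset.notMem_erase n S), chi_insert_s12 (Finset.notMem_erase n S),
    eps_bflip, chi_bflip_not_mem (Finset.notMem_erase n S)]
  ring

lemma sum_eps_zero (n : Fin d) (F : (Fin d → Bool) → ℝ)
    (hF : ∀ x, F (bflip d n x) = F x) :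
    ∑ x : Fin d → Bool, eps d n x * F x = 0 := by
  have h := sum_bflip n (fun x => eps d n x * F x)
  simp only [eps_bflip, hF] at h
  have h2 : ∑ x : Fin d → Bool, -(eps d n x * F x) = ∑ x : Fin d → Bool, eps d n x * F x := by
    simpa [neg_mul] using h
  rw [Finset.sum_neg_distrib] at h2
  linarith

lemma chi_mul_chi (S T : Finset (Fin d)) (x : Fin d → Bool) :
    chi d S x * chi d T x = chi d (symmDiff S T) x := by
  have hch : ∀ U : Finset (Fin d), chi d U x = ∏ i ∈ U, (if x i then (1:ℝ) else -1) :=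
    fun U => rfl
  set e : Fin d → ℝ := fun i => if x i then (1:ℝ) else -1 with he
  have key : ∀ y : Fin d, e y * e y = 1 := by
    intro y; by_cases h : x y <;> simp [he, h]
  have pS : ∏ i ∈ S, e i = (∏ i ∈ S \ T, e i) * ∏ i ∈ S ∩ T, e i := by
    rw [← Finset.prod_union (Finset.disjoint_sdiff_inter S T), Finset.sdiff_union_inter]
  have pT : ∏ i ∈ T, e i = (∏ i ∈ T \ S, e i) * ∏ i ∈ S ∩ T, e i := by
    rw [← Finset.prod_union (by rw [Finset.inter_comm]; exact Finset.disjoint_sdiff_inter T S),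
      Finset.inter_comm, Finset.sdiff_union_inter]
  have hsd : symmDiff S T = (S \ T) ∪ (T \ S) := symmDiff_def S T
  have hone : (∏ i ∈ S ∩ T, e i) * (∏ i ∈ S ∩ T, e i) = 1 := by
    rw [← Finset.prod_mul_distrib]
    exact Finset.prod_eq_one fun y _ => key y
  rw [hch S, hch T, hch (symmDiff S T), hsd, Finset.prod_union disjoint_sdiff_sdiff, pS, pT]
  linear_combination (∏ i ∈ S \ T, e i) * (∏ i ∈ T \ S, e i) * hone

lemma chi_empty (x : Fin d → Bool) : chi d ∅ x = 1 := by simp [chi]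

lemma sum_chi_nonempty {S : Finset (Fin d)} (h : S.Nonempty) :
    ∑ x : Fin d → Bool, chi d S x = 0 := by
  obtain ⟨n, hn⟩ := h
  have h1 : ∀ x, chi d S x = eps d n x * chi d (S.erase n) x := by
    intro x
    rw [← chi_insert_s12 (Finset.notMem_erase n S), Finset.insert_erase hn]
  simp only [h1]
  exact sum_eps_zero n _ (fun x => chi_bflip_not_mem (Finset.notMem_erase n S) x)

lemma sum_chi_mul_chi (S T : Finset (Fin d)) :
    ∑ x : Fin d → Bool, chi d S x * chi d T x = if S = T then (2:ℝ)^d else 0 := by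
  simp only [chi_mul_chi]
  by_cases h : S = T
  · subst h
    have : symmDiff S S = (⊥ : Finset (Fin d)) := symmDiff_self S
    rw [if_pos rfl, this]
    simp only [Finset.bot_eq_empty, chi_empty, Finset.sum_const, Finset.card_univ, nsmul_eq_mul,
      mul_one]
    norm_num [Fintype.card_fun]
  · rw [if_neg h]
    apply sum_chi_nonempty
    rw [Finset.nonempty_iff_ne_empty]
    intro he
    exact h (by simpa [symmDiff_eq_bot] using he)

lemma two_pow_pos : (0:ℝ) < 2 ^ d := by positivity

lemma sum_mul_chi (h : (Fin d → Bool) → ℝ) (S : Finset (Fin d)) :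
    ∑ x : Fin d → Bool, h x * chi d S x = 2 ^ d * fhat d h S := by
  unfold fhat unifE
  field_simp

lemma sum_sum_chi_swap (c : Finset (Fin d) → ℝ) (T : Finset (Fin d)) :
    ∑ x : Fin d → Bool, (∑ S : Finset (Fin d), c S * chi d S x) * chi d T x
      = 2 ^ d * c T := by
  have h1 : ∀ x : Fin d → Bool, (∑ S : Finset (Fin d), c S * chi d S x) * chi d T x
      = ∑ S : Finset (Fin d), c S * (chi d S x * chi d T x) := by
    intro x; rw [Finset.sum_mul]; exact Finset.sum_congr rfl fun S _ => by ring
  simp only [h1]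
  rw [Finset.sum_comm]
  have h2 : ∀ S : Finset (Fin d), ∑ x : Fin d → Bool, c S * (chi d S x * chi d T x)
      = c S * (if S = T then (2:ℝ)^d else 0) := by
    intro S; rw [← Finset.mul_sum, sum_chi_mul_chi]
  simp only [h2]
  simp [Finset.sum_ite_eq', mul_comm]

lemma fhat_spectral (c : Finset (Fin d) → ℝ) (T : Finset (Fin d)) :
    fhat d (fun x => ∑ S : Finset (Fin d), c S * chi d S x) T = c T := by
  unfold fhat unifE
  rw [sum_sum_chi_swap]
  field_simp

lemma parseval_spectral (c : Finset (Fin d) → ℝ) :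
    ∑ x : Fin d → Bool, (∑ S : Finset (Fin d), c S * chi d S x) ^ 2
      = 2 ^ d * ∑ S : Finset (Fin d), (c S) ^ 2 := by
  have h1 : ∀ x : Fin d → Bool, (∑ S : Finset (Fin d), c S * chi d S x) ^ 2
      = ∑ S : Finset (Fin d), c S * ((∑ U : Finset (Fin d), c U * chi d U x) * chi d S x) := by
    intro x
    rw [pow_two, Finset.sum_mul]
    exact Finset.sum_congr rfl fun S _ => by ring
  simp only [h1]
  rw [Finset.sum_comm]
  have h2 : ∀ S : Finset (Fin d), ∑ x : Fin d → Bool,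
      c S * ((∑ U : Finset (Fin d), c U * chi d U x) * chi d S x) = c S * (2^d * c S) := by
    intro S; rw [← Finset.mul_sum, sum_sum_chi_swap]
  simp only [h2]
  rw [Finset.mul_sum]
  exact Finset.sum_congr rfl fun S _ => by ring

lemma sum_prod_spectral (h : (Fin d → Bool) → ℝ) (c : Finset (Fin d) → ℝ) :
    ∑ x : Fin d → Bool, h x * (∑ S : Finset (Fin d), c S * chi d S x)
      = 2 ^ d * ∑ S : Finset (Fin d), c S * fhat d h S := by
  have h1 : ∀ x : Fin d → Bool, h x * (∑ S : Finset (Fin d), c S * chi d S x)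
      = ∑ S : Finset (Fin d), c S * (h x * chi d S x) := by
    intro x; rw [Finset.mul_sum]; exact Finset.sum_congr rfl fun S _ => by ring
  simp only [h1]
  rw [Finset.sum_comm]
  have h2 : ∀ S : Finset (Fin d), ∑ x : Fin d → Bool, c S * (h x * chi d S x)
      = c S * (2^d * fhat d h S) := by
    intro S; rw [← Finset.mul_sum, sum_mul_chi]
  simp only [h2]
  rw [Finset.mul_sum]
  exact Finset.sum_congr rfl fun S _ => by ring

lemma bessel (h : (Fin d → Bool) → ℝ) :
    ∑ S : Finset (Fin d), (fhat d h S) ^ 2 ≤ unifE d (fun x => h x ^ 2) := by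
  have key : 0 ≤ ∑ x : Fin d → Bool,
      (h x - ∑ S : Finset (Fin d), fhat d h S * chi d S x) ^ 2 :=
    Finset.sum_nonneg fun x _ => sq_nonneg _
  have expand : ∀ x : Fin d → Bool,
      (h x - ∑ S : Finset (Fin d), fhat d h S * chi d S x) ^ 2
      = h x ^ 2 - 2 * (h x * ∑ S : Finset (Fin d), fhat d h S * chi d S x)
        + (∑ S : Finset (Fin d), fhat d h S * chi d S x) ^ 2 := by
    intro x; ring
  simp only [expand] at key
  rw [Finset.sum_add_distrib, Finset.sum_sub_distrib, ← Finset.mul_sum,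
    sum_prod_spectral, parseval_spectral] at key
  simp only [← pow_two] at key
  unfold unifE
  rw [le_div_iff₀ two_pow_pos]
  simp only []
  linarith [key]

noncomputable def rho : ℝ := (Real.sqrt 3)⁻¹

lemma rho_sq : rho ^ 2 = 3⁻¹ := by
  rw [rho, inv_pow, Real.sq_sqrt (by norm_num : (3:ℝ) ≥ 0)]

lemma eps_sq (n : Fin d) (x : Fin d → Bool) : eps d n x = 1 ∨ eps d n x = -1 := by
  unfold eps; by_cases h : x n <;> simp [h]

lemma hyper (J : Finset (Fin d)) (c : Finset (Fin d) → ℝ) :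
    ∑ x : Fin d → Bool, (∑ S ∈ J.powerset, rho ^ S.card * c S * chi d S x) ^ 4
      ≤ 2 ^ d * (∑ S ∈ J.powerset, (c S) ^ 2) ^ 2 := by
  induction J using Finset.induction_on generalizing c with
  | empty =>
      simp only [Finset.powerset_empty, Finset.sum_singleton, Finset.card_empty, pow_zero,
        chi_empty, one_mul, mul_one]
      rw [Finset.sum_const, Finset.card_univ]
      have : Fintype.card (Fin d → Bool) = 2 ^ d := by
        simp [Fintype.card_fun]
      rw [this]
      simp only [nsmul_eq_mul]
      push_cast
      ring_nf
      exact le_refl _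
  | @insert n J' hn IH =>
      set P : (Fin d → Bool) → ℝ :=
        fun x => ∑ T ∈ J'.powerset, rho ^ T.card * c T * chi d T x with hP
      set Q : (Fin d → Bool) → ℝ :=
        fun x => ∑ T ∈ J'.powerset, rho ^ T.card * c (insert n T) * chi d T x with hQ
      have hnotmem : ∀ T ∈ J'.powerset, n ∉ T := by
        intro T hT hmem
        exact hn (Finset.mem_powerset.mp hT hmem)
      have split : ∀ x : Fin d → Bool,
          ∑ S ∈ (insert n J').powerset, rho ^ S.card * c S * chi d S x
            = P x + rho * eps d n x * Q x := by
        intro x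
        rw [Finset.sum_powerset_insert hn]
        congr 1
        rw [Finset.mul_sum]
        refine Finset.sum_congr rfl fun T hT => ?_
        rw [Finset.card_insert_of_notMem (hnotmem T hT), chi_insert_s12 (hnotmem T hT)]
        ring
      have hPflip : ∀ x, P (bflip d n x) = P x := by
        intro x
        exact Finset.sum_congr rfl fun T hT => by
          rw [chi_bflip_not_mem (hnotmem T hT)]
      have hQflip : ∀ x, Q (bflip d n x) = Q x := by
        intro x
        exact Finset.sum_congr rfl fun T hT => by
          rw [chi_bflip_not_mem (hnotmem T hT)]
      have expand : ∀ x : Fin d → Bool,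
          (P x + rho * eps d n x * Q x) ^ 4
            = P x ^ 4 + 6 * rho ^ 2 * (P x ^ 2 * Q x ^ 2) + rho ^ 4 * Q x ^ 4
              + eps d n x * (4 * rho * P x ^ 3 * Q x + 4 * rho ^ 3 * P x * Q x ^ 3) := by
        intro x
        rcases eps_sq n x with h | h <;> rw [h] <;> ring
      simp only [split, expand]
      rw [Finset.sum_add_distrib, Finset.sum_add_distrib, Finset.sum_add_distrib,
        ← Finset.mul_sum, ← Finset.mul_sum]
      have hcross : ∑ x : Fin d → Bool,
          eps d n x * (4 * rho * P x ^ 3 * Q x + 4 * rho ^ 3 * P x * Q x ^ 3) = 0 := by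
        apply sum_eps_zero
        intro x
        rw [hPflip, hQflip]
      rw [hcross, add_zero]
      set a : ℝ := ∑ T ∈ J'.powerset, (c T) ^ 2 with ha
      set b : ℝ := ∑ T ∈ J'.powerset, (c (insert n T)) ^ 2 with hb
      have hA : ∑ x : Fin d → Bool, P x ^ 4 ≤ 2 ^ d * a ^ 2 := IH c
      have hB : ∑ x : Fin d → Bool, Q x ^ 4 ≤ 2 ^ d * b ^ 2 :=
        IH (fun T => c (insert n T))
      have ha0 : 0 ≤ a := Finset.sum_nonneg fun _ _ => sq_nonneg _
      have hb0 : 0 ≤ b := Finset.sum_nonneg fun _ _ => sq_nonneg _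
      have hP40 : 0 ≤ ∑ x : Fin d → Bool, P x ^ 4 :=
        Finset.sum_nonneg fun x _ => by positivity
      have hQ40 : 0 ≤ ∑ x : Fin d → Bool, Q x ^ 4 :=
        Finset.sum_nonneg fun x _ => by positivity
      have hCS : (∑ x : Fin d → Bool, P x ^ 2 * Q x ^ 2) ^ 2
          ≤ (∑ x : Fin d → Bool, P x ^ 4) * ∑ x : Fin d → Bool, Q x ^ 4 := by
        have := Finset.sum_mul_sq_le_sq_mul_sq Finset.univ
          (fun x : Fin d → Bool => P x ^ 2) (fun x : Fin d → Bool => Q x ^ 2)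
        simpa [← pow_mul] using this
      have hmid0 : 0 ≤ ∑ x : Fin d → Bool, P x ^ 2 * Q x ^ 2 :=
        Finset.sum_nonneg fun x _ => by positivity
      have hmid : ∑ x : Fin d → Bool, P x ^ 2 * Q x ^ 2 ≤ 2 ^ d * (a * b) := by
        have h2 : (∑ x : Fin d → Bool, P x ^ 2 * Q x ^ 2) ^ 2
            ≤ (2 ^ d * (a * b)) ^ 2 := by
          calc (∑ x : Fin d → Bool, P x ^ 2 * Q x ^ 2) ^ 2
              ≤ (∑ x : Fin d → Bool, P x ^ 4) * ∑ x : Fin d → Bool, Q x ^ 4 := hCS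
            _ ≤ (2 ^ d * a ^ 2) * (2 ^ d * b ^ 2) := by
                apply mul_le_mul hA hB hQ40 (by positivity)
            _ = (2 ^ d * (a * b)) ^ 2 := by ring
        have hrhs0 : (0:ℝ) ≤ 2 ^ d * (a * b) := by positivity
        nlinarith [h2, hmid0, hrhs0]
      have hrho2 : rho ^ 2 = 3⁻¹ := rho_sq
      have hrho4 : rho ^ 4 = 9⁻¹ := by
        have : rho ^ 4 = (rho ^ 2) ^ 2 := by ring
        rw [this, hrho2]; norm_num
      have hRHS : ∑ S ∈ (insert n J').powerset, (c S) ^ 2 = a + b := by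
        rw [Finset.sum_powerset_insert hn]
      rw [hRHS, hrho2, hrho4]
      have e1 : (0:ℝ) ≤ 2 ^ d := le_of_lt two_pow_pos
      nlinarith [hA, hB, hmid, mul_nonneg e1 (sq_nonneg b)]

lemma noise_bound (g : (Fin d → Bool) → ℝ) (hg : ∀ x, 0 ≤ g x ∧ g x ≤ 1) :
    ∑ T : Finset (Fin d), (3:ℝ)⁻¹ ^ T.card * (fhat d g T) ^ 2
      ≤ unifE d g * Real.sqrt (unifE d g) := by
  classical
  set N : ℝ := 2 ^ d with hN
  have hN0 : (0:ℝ) < N := two_pow_pos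
  set G : ℝ := ∑ x : Fin d → Bool, g x with hG
  have hG0 : 0 ≤ G := Finset.sum_nonneg fun x _ => (hg x).1
  set c : Finset (Fin d) → ℝ := fun T => rho ^ T.card * fhat d g T with hc
  set L : ℝ := ∑ T : Finset (Fin d), (3:ℝ)⁻¹ ^ T.card * (fhat d g T) ^ 2 with hL
  have hcL : ∑ T : Finset (Fin d), (c T) ^ 2 = L := by
    refine Finset.sum_congr rfl fun T _ => ?_
    rw [hc]
    have : (rho ^ T.card) ^ 2 = (3:ℝ)⁻¹ ^ T.card := by
      rw [← pow_mul, mul_comm, pow_mul, rho_sq]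
    nlinarith [this]
  set Sg : (Fin d → Bool) → ℝ := fun x => ∑ T : Finset (Fin d), c T * chi d T x with hSg
  set Q : ℝ := ∑ x : Fin d → Bool, (Sg x) ^ 2 with hQdef
  have hQL : Q = N * L := by rw [hQdef, hSg, parseval_spectral, hcL]
  have hQ0 : 0 ≤ Q := Finset.sum_nonneg fun x _ => sq_nonneg _
  set h : (Fin d → Bool) → ℝ :=
    fun x => ∑ T : Finset (Fin d), (rho ^ T.card * c T) * chi d T x with hh
  -- Step 1: ∑ g·h = Q
  have step1 : ∑ x : Fin d → Bool, g x * h x = Q := by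
    rw [hh]
    rw [sum_prod_spectral g (fun T => rho ^ T.card * c T)]
    rw [hQL]
    congr 1
    rw [← hcL]
    refine Finset.sum_congr rfl fun T _ => ?_
    rw [hc]; ring
  -- Cauchy-Schwarz chain
  set A : ℝ := ∑ x : Fin d → Bool, g x * |h x| with hA
  set B : ℝ := ∑ x : Fin d → Bool, g x * (h x) ^ 2 with hB
  set H4 : ℝ := ∑ x : Fin d → Bool, (h x) ^ 4 with hH4
  have hQA : Q ≤ A := by
    rw [← step1, hA]
    refine Finset.sum_le_sum fun x _ => ?_
    exact mul_le_mul_of_nonneg_left (le_abs_self _) (hg x).1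
  have hA2 : A ^ 2 ≤ G * B := by
    have := Finset.sum_mul_sq_le_sq_mul_sq Finset.univ
      (fun x : Fin d → Bool => Real.sqrt (g x))
      (fun x : Fin d → Bool => Real.sqrt (g x) * |h x|)
    have e1 : ∀ x : Fin d → Bool,
        Real.sqrt (g x) * (Real.sqrt (g x) * |h x|) = g x * |h x| := by
      intro x
      rw [← mul_assoc, Real.mul_self_sqrt (hg x).1]
    have e2 : ∀ x : Fin d → Bool, Real.sqrt (g x) ^ 2 = g x := fun x =>
      Real.sq_sqrt (hg x).1
    have e3 : ∀ x : Fin d → Bool,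
        (Real.sqrt (g x) * |h x|) ^ 2 = g x * (h x) ^ 2 := by
      intro x
      rw [mul_pow, e2, sq_abs]
    simp only [e1, e2, e3] at this
    exact this
  have hB2 : B ^ 2 ≤ G * H4 := by
    have cs := Finset.sum_mul_sq_le_sq_mul_sq Finset.univ
      (fun x : Fin d → Bool => Real.sqrt (g x))
      (fun x : Fin d → Bool => Real.sqrt (g x) * (h x) ^ 2)
    have e1 : ∀ x : Fin d → Bool,
        Real.sqrt (g x) * (Real.sqrt (g x) * (h x) ^ 2) = g x * (h x) ^ 2 := by
      intro x
      rw [← mul_assoc, Real.mul_self_sqrt (hg x).1]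
    have e2 : ∀ x : Fin d → Bool, Real.sqrt (g x) ^ 2 = g x := fun x =>
      Real.sq_sqrt (hg x).1
    have e3 : ∀ x : Fin d → Bool,
        (Real.sqrt (g x) * (h x) ^ 2) ^ 2 = g x * (h x) ^ 4 := by
      intro x
      rw [mul_pow, e2]
      ring
    simp only [e1, e2, e3] at cs
    have hgh4 : ∑ x : Fin d → Bool, g x * (h x) ^ 4 ≤ H4 := by
      rw [hH4]
      refine Finset.sum_le_sum fun x _ => ?_
      have h40 : (0:ℝ) ≤ (h x)^4 := by positivity
      nlinarith [(hg x).2, h40]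
    calc B ^ 2 ≤ G * ∑ x : Fin d → Bool, g x * (h x) ^ 4 := cs
      _ ≤ G * H4 := by
          exact mul_le_mul_of_nonneg_left hgh4 hG0
  -- hypercontractivity: H4 ≤ Q² / N
  have hH4bound : H4 * N ≤ Q ^ 2 := by
    have hyp := hyper (Finset.univ : Finset (Fin d)) c
    rw [Finset.powerset_univ] at hyp
    rw [hcL] at hyp
    have : H4 ≤ N * L ^ 2 := hyp
    calc H4 * N ≤ N * L ^ 2 * N := by
          exact mul_le_mul_of_nonneg_right this (le_of_lt hN0)
      _ = Q ^ 2 := by rw [hQL]; ring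
  -- combine: Q² * N ≤ G³
  have hA0 : 0 ≤ A := le_trans hQ0 hQA
  have hB0 : 0 ≤ B := Finset.sum_nonneg fun x _ => mul_nonneg (hg x).1 (sq_nonneg _)
  have hkey : Q ^ 2 * N ≤ G ^ 3 := by
    have c1 : Q ^ 4 ≤ A ^ 4 := pow_le_pow_left₀ hQ0 hQA 4
    have c2 : (A ^ 2) ^ 2 ≤ (G * B) ^ 2 := pow_le_pow_left₀ (sq_nonneg A) hA2 2
    have c4 : G ^ 2 * B ^ 2 ≤ G ^ 2 * (G * H4) :=
      mul_le_mul_of_nonneg_left hB2 (sq_nonneg G)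
    have c5 : Q ^ 4 ≤ G ^ 3 * H4 := by
      calc Q ^ 4 ≤ A ^ 4 := c1
        _ = (A ^ 2) ^ 2 := by ring
        _ ≤ (G * B) ^ 2 := c2
        _ = G ^ 2 * B ^ 2 := by ring
        _ ≤ G ^ 2 * (G * H4) := c4
        _ = G ^ 3 * H4 := by ring
    have h4 : Q ^ 4 * N ≤ G ^ 3 * Q ^ 2 := by
      calc Q ^ 4 * N ≤ (G ^ 3 * H4) * N :=
            mul_le_mul_of_nonneg_right c5 (le_of_lt hN0)
        _ = G ^ 3 * (H4 * N) := by ring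
        _ ≤ G ^ 3 * Q ^ 2 := mul_le_mul_of_nonneg_left hH4bound (pow_nonneg hG0 3)
    rcases eq_or_lt_of_le hQ0 with hq | hq
    · rw [← hq]
      norm_num
      exact pow_nonneg hG0 3
    · have hq2 : 0 < Q ^ 2 := pow_pos hq 2
      have hstep : Q ^ 2 * N * Q ^ 2 ≤ G ^ 3 * Q ^ 2 := by
        calc Q ^ 2 * N * Q ^ 2 = Q ^ 4 * N := by ring
          _ ≤ G ^ 3 * Q ^ 2 := h4
      exact le_of_mul_le_mul_right hstep hq2
  -- conclude
  have hEg : unifE d g = G / N := rfl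
  have hLQ : L = Q / N := by rw [hQL]; field_simp
  rw [hL] at hLQ ⊢
  rw [hLQ, hEg]
  have hrhs0 : 0 ≤ G / N * Real.sqrt (G / N) := mul_nonneg (div_nonneg hG0 (le_of_lt hN0)) (Real.sqrt_nonneg _)
  have hlhs0 : 0 ≤ Q / N := div_nonneg hQ0 (le_of_lt hN0)
  have hsq : (Q / N) ^ 2 ≤ (G / N * Real.sqrt (G / N)) ^ 2 := by
    have e : (G / N * Real.sqrt (G / N)) ^ 2 = G ^ 3 / N ^ 3 := by
      rw [mul_pow, Real.sq_sqrt (div_nonneg hG0 (le_of_lt hN0))]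
      field_simp
    rw [e, div_pow]
    rw [div_le_div_iff₀ (pow_pos hN0 2) (pow_pos hN0 3)]
    calc Q ^ 2 * N ^ 3 = (Q ^ 2 * N) * N ^ 2 := by ring
      _ ≤ G ^ 3 * N ^ 2 := mul_le_mul_of_nonneg_right hkey (pow_nonneg (le_of_lt hN0) 2)
  calc Q / N = Real.sqrt ((Q / N) ^ 2) := (Real.sqrt_sq hlhs0).symm
    _ ≤ Real.sqrt ((G / N * Real.sqrt (G / N)) ^ 2) := Real.sqrt_le_sqrt hsq
    _ = G / N * Real.sqrt (G / N) := Real.sqrt_sq hrhs0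

lemma disc_bflip (f : (Fin d → Bool) → ℝ) (i : Fin d) (x : Fin d → Bool) :
    disc d f i (bflip d i x) = disc d f i x := by
  unfold disc bflip
  rw [Function.update_idem, Function.update_idem]

lemma update_self_of_true (x : Fin d → Bool) (i : Fin d) (h : x i = true) :
    Function.update x i true = x := by
  conv_lhs => rw [← h]
  exact Function.update_eq_self i x

lemma update_self_of_false (x : Fin d → Bool) (i : Fin d) (h : x i = false) :
    Function.update x i false = x := by
  conv_lhs => rw [← h]
  exact Function.update_eq_self i x

lemma disc_eq (f : (Fin d → Bool) → ℝ) (i : Fin d) (x : Fin d → Bool) :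
    disc d f i x = (f x - f (bflip d i x)) * eps d i x := by
  by_cases h : x i
  · have h1 : Function.update x i true = x := update_self_of_true x i h
    have h2 : bflip d i x = Function.update x i false := by
      unfold bflip; rw [h]; rfl
    unfold disc eps
    rw [h1, h2, if_pos h, mul_one]
  · have hb : x i = false := by simpa using h
    have h1 : Function.update x i false = x := update_self_of_false x i hb
    have h2 : bflip d i x = Function.update x i true := by
      unfold bflip; rw [hb]; rfl
    unfold disc eps
    rw [h1, h2, if_neg h]
    ring

lemma sum_bflip' (n : Fin d) (F : (Fin d → Bool) → ℝ) :
    ∑ x : Fin d → Bool, F x = ∑ x : Fin d → Bool, F (bflip d n x) :=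
  (sum_bflip n F).symm

lemma fhat_disc_not_mem (f : (Fin d → Bool) → ℝ) {i : Fin d} {T : Finset (Fin d)}
    (h : i ∉ T) : fhat d (disc d f i) T = 2 * fhat d f (insert i T) := by
  have key : ∑ x : Fin d → Bool, disc d f i x * chi d T x
      = 2 * ∑ x : Fin d → Bool, f x * chi d (insert i T) x := by
    have e1 : ∀ x : Fin d → Bool, disc d f i x * chi d T x
        = f x * (eps d i x * chi d T x) - f (bflip d i x) * eps d i x * chi d T x := by
      intro x
      rw [disc_eq]
      ring
    simp only [e1]
    rw [Finset.sum_sub_distrib]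
    have e2 : ∑ x : Fin d → Bool, f (bflip d i x) * eps d i x * chi d T x
        = - ∑ x : Fin d → Bool, f x * (eps d i x * chi d T x) := by
      rw [sum_bflip' i (fun x => f (bflip d i x) * eps d i x * chi d T x)]
      rw [← Finset.sum_neg_distrib]
      refine Finset.sum_congr rfl fun x _ => ?_
      rw [bflip_invol i x, eps_bflip, chi_bflip_not_mem h]
      ring
    rw [e2]
    have e3 : ∀ x : Fin d → Bool, f x * chi d (insert i T) x
        = f x * (eps d i x * chi d T x) := by
      intro x; rw [chi_insert_s12 h]
    simp only [e3]
    ring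
  unfold fhat unifE
  simp only []
  rw [key]
  ring

lemma fhat_disc_mem (f : (Fin d → Bool) → ℝ) {i : Fin d} {T : Finset (Fin d)}
    (h : i ∈ T) : fhat d (disc d f i) T = 0 := by
  unfold fhat unifE
  rw [div_eq_zero_iff]
  left
  have e1 : ∀ x : Fin d → Bool, disc d f i x * chi d T x
      = eps d i x * (disc d f i x * chi d (T.erase i) x) := by
    intro x
    conv_lhs => rw [show T = insert i (T.erase i) from (Finset.insert_erase h).symm]
    rw [chi_insert_s12 (Finset.notMem_erase i T)]
    ring
  simp only [e1]
  apply sum_eps_zero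
  intro x
  rw [disc_bflip, chi_bflip_not_mem (Finset.notMem_erase i T)]

lemma disc_nonneg {f : (Fin d → Bool) → ℝ} (hmono : BMono d f) (i : Fin d)
    (x : Fin d → Bool) : 0 ≤ disc d f i x := by
  unfold disc
  rw [sub_nonneg]
  apply hmono
  intro j
  by_cases hj : j = i
  · subst hj; simp
  · rw [Function.update_of_ne hj, Function.update_of_ne hj]

lemma disc_le_one {f : (Fin d → Bool) → ℝ} (hf : ∀ x, f x ∈ Set.Icc (0:ℝ) 1)
    (i : Fin d) (x : Fin d → Bool) : disc d f i x ≤ 1 := by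
  unfold disc
  have h1 := (hf (Function.update x i true)).2
  have h2 := (hf (Function.update x i false)).1
  linarith

lemma reindex_mem (F : Finset (Fin d) → ℝ) (i : Fin d) (p : Finset (Fin d) → Prop)
    [DecidablePred p] :
    ∑ S ∈ Finset.univ.filter (fun S : Finset (Fin d) => i ∈ S ∧ p S), F S
      = ∑ T ∈ Finset.univ.filter (fun T : Finset (Fin d) => i ∉ T ∧ p (insert i T)),
          F (insert i T) := by
  apply Finset.sum_bij' (fun S _ => Finset.erase S i) (fun T _ => insert i T)
  · intro S hS
    simp only [Finset.mem_filter, Finset.mem_univ, true_and] at hS ⊢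
    constructor
    · exact Finset.notMem_erase i S
    · rw [Finset.insert_erase hS.1]; exact hS.2
  · intro T hT
    simp only [Finset.mem_filter, Finset.mem_univ, true_and] at hT ⊢
    exact ⟨Finset.mem_insert_self i T, hT.2⟩
  · intro S hS
    simp only [Finset.mem_filter, Finset.mem_univ, true_and] at hS
    rw [Finset.insert_erase hS.1]
  · intro T hT
    simp only [Finset.mem_filter, Finset.mem_univ, true_and] at hT
    rw [Finset.erase_insert hT.1]
  · intro S hS
    simp only [Finset.mem_filter, Finset.mem_univ, true_and] at hS
    rw [Finset.insert_erase hS.1]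

lemma partA_per_i (f : (Fin d → Bool) → ℝ) (i : Fin d) :
    ∑ S ∈ Finset.univ.filter (fun S : Finset (Fin d) => i ∈ S), (fhat d f S) ^ 2
      ≤ unifE d (fun x => (disc d f i x) ^ 2) / 4 := by
  have h0 : ∑ S ∈ Finset.univ.filter (fun S : Finset (Fin d) => i ∈ S), (fhat d f S) ^ 2
      = ∑ S ∈ Finset.univ.filter (fun S : Finset (Fin d) => i ∈ S ∧ True), (fhat d f S) ^ 2 := by
    simp
  rw [h0, reindex_mem (fun S => (fhat d f S)^2) i (fun _ => True)]
  have e1 : ∀ T ∈ Finset.univ.filter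
      (fun T : Finset (Fin d) => i ∉ T ∧ True), (fhat d f (insert i T)) ^ 2
        = (fhat d (disc d f i) T) ^ 2 / 4 := by
    intro T hT
    simp only [Finset.mem_filter, Finset.mem_univ, true_and] at hT
    rw [fhat_disc_not_mem f hT.1]
    ring
  rw [Finset.sum_congr rfl e1]
  have e2 : ∑ T ∈ Finset.univ.filter
        (fun T : Finset (Fin d) => i ∉ T ∧ True), (fhat d (disc d f i) T) ^ 2 / 4
      ≤ ∑ T : Finset (Fin d), (fhat d (disc d f i) T) ^ 2 / 4 := by
    apply Finset.sum_le_sum_of_subset_of_nonneg (Finset.filter_subset _ _)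
    intro T _ _
    positivity
  refine le_trans e2 ?_
  rw [← Finset.sum_div]
  have := bessel (d := d) (disc d f i)
  apply div_le_div_of_nonneg_right this (by norm_num)

lemma partB_per_i (f : (Fin d → Bool) → ℝ) (i : Fin d) (d0 : ℕ) (hd0 : 1 ≤ d0) :
    ∑ S ∈ Finset.univ.filter (fun S : Finset (Fin d) => i ∈ S ∧ S.card ≤ d0),
        (fhat d f S) ^ 2
      ≤ (3:ℝ) ^ (d0 - 1) / 4 *
        ∑ T : Finset (Fin d), (3:ℝ)⁻¹ ^ T.card * (fhat d (disc d f i) T) ^ 2 := by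
  rw [reindex_mem (fun S => (fhat d f S)^2) i (fun S => S.card ≤ d0)]
  have e1 : ∀ T ∈ Finset.univ.filter
      (fun T : Finset (Fin d) => i ∉ T ∧ (insert i T).card ≤ d0),
      (fhat d f (insert i T)) ^ 2
        ≤ (3:ℝ) ^ (d0 - 1) / 4 * ((3:ℝ)⁻¹ ^ T.card * (fhat d (disc d f i) T) ^ 2) := by
    intro T hT
    simp only [Finset.mem_filter, Finset.mem_univ, true_and] at hT
    obtain ⟨hiT, hcard⟩ := hT
    rw [Finset.card_insert_of_notMem hiT] at hcard
    have hTd0 : T.card ≤ d0 - 1 := by omega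
    have hpow : (3:ℝ) ^ T.card ≤ (3:ℝ) ^ (d0 - 1) :=
      pow_le_pow_right₀ (by norm_num) hTd0
    have hpos : (0:ℝ) < 3 ^ T.card := by positivity
    have key : (1:ℝ) ≤ (3:ℝ) ^ (d0 - 1) * (3:ℝ)⁻¹ ^ T.card := by
      rw [inv_pow, ← div_eq_mul_inv, le_div_iff₀ hpos, one_mul]
      exact hpow
    rw [fhat_disc_not_mem f hiT]
    nlinarith [key, sq_nonneg (fhat d f (insert i T))]
  calc (∑ T ∈ Finset.univ.filter
      (fun T : Finset (Fin d) => i ∉ T ∧ (insert i T).card ≤ d0),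
        (fhat d f (insert i T)) ^ 2)
      ≤ ∑ T ∈ Finset.univ.filter
          (fun T : Finset (Fin d) => i ∉ T ∧ (insert i T).card ≤ d0),
          (3:ℝ) ^ (d0 - 1) / 4 * ((3:ℝ)⁻¹ ^ T.card * (fhat d (disc d f i) T) ^ 2) :=
        Finset.sum_le_sum e1
    _ ≤ ∑ T : Finset (Fin d),
          (3:ℝ) ^ (d0 - 1) / 4 * ((3:ℝ)⁻¹ ^ T.card * (fhat d (disc d f i) T) ^ 2) := by
        apply Finset.sum_le_sum_of_subset_of_nonneg (Finset.filter_subset _ _)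
        intro T _ _
        positivity
    _ = (3:ℝ) ^ (d0 - 1) / 4 *
          ∑ T : Finset (Fin d), (3:ℝ)⁻¹ ^ T.card * (fhat d (disc d f i) T) ^ 2 := by
        rw [Finset.mul_sum]

lemma swap_card_sum (F : Finset (Fin d) → ℝ) :
    ∑ S : Finset (Fin d), (S.card : ℝ) * F S
      = ∑ i : Fin d, ∑ S ∈ Finset.univ.filter (fun S : Finset (Fin d) => i ∈ S), F S := by
  have e : ∀ S : Finset (Fin d), (S.card : ℝ) * F S
      = ∑ i : Fin d, if i ∈ S then F S else 0 := by
    intro S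
    rw [Finset.sum_ite_mem, Finset.univ_inter, Finset.sum_const, nsmul_eq_mul]
  simp only [e]
  rw [Finset.sum_comm]
  exact Finset.sum_congr rfl fun i _ => (Finset.sum_filter _ _).symm

lemma part1 (f : (Fin d → Bool) → ℝ) (d0 : ℕ) (hd0 : 1 ≤ d0) :
    ∑ S ∈ Finset.univ.filter (fun S : Finset (Fin d) => d0 < S.card), (fhat d f S) ^ 2
      ≤ (∑ i : Fin d, unifE d (fun x => (disc d f i x) ^ 2)) / (4 * d0) := by
  have hd0R : (0:ℝ) < (d0 : ℝ) := by positivity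
  calc (∑ S ∈ Finset.univ.filter (fun S : Finset (Fin d) => d0 < S.card), (fhat d f S) ^ 2)
      ≤ ∑ S ∈ Finset.univ.filter (fun S : Finset (Fin d) => d0 < S.card),
          (S.card : ℝ) / d0 * (fhat d f S) ^ 2 := by
        refine Finset.sum_le_sum fun S hS => ?_
        simp only [Finset.mem_filter, Finset.mem_univ, true_and] at hS
        have h1 : (1:ℝ) ≤ (S.card : ℝ) / d0 := by
          rw [le_div_iff₀ hd0R, one_mul]
          exact_mod_cast le_of_lt hS
        nlinarith [sq_nonneg (fhat d f S)]
    _ ≤ ∑ S : Finset (Fin d), (S.card : ℝ) / d0 * (fhat d f S) ^ 2 := by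
        apply Finset.sum_le_sum_of_subset_of_nonneg (Finset.filter_subset _ _)
        intro S _ _
        positivity
    _ = (1 / d0) * ∑ S : Finset (Fin d), (S.card : ℝ) * (fhat d f S) ^ 2 := by
        rw [Finset.mul_sum]
        exact Finset.sum_congr rfl fun S _ => by ring
    _ = (1 / d0) * ∑ i : Fin d,
          ∑ S ∈ Finset.univ.filter (fun S : Finset (Fin d) => i ∈ S), (fhat d f S) ^ 2 := by
        rw [swap_card_sum]
    _ ≤ (1 / d0) * ∑ i : Fin d, unifE d (fun x => (disc d f i x) ^ 2) / 4 := by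
        apply mul_le_mul_of_nonneg_left ?_ (by positivity)
        exact Finset.sum_le_sum fun i _ => partA_per_i f i
    _ = (∑ i : Fin d, unifE d (fun x => (disc d f i x) ^ 2)) / (4 * d0) := by
        rw [← Finset.sum_div, div_mul_div_comm, one_mul, mul_comm (d0:ℝ) 4]

lemma part2_count (F : Finset (Fin d) → ℝ) (hF : ∀ S, 0 ≤ F S) (J : Finset (Fin d))
    (d0 : ℕ) :
    ∑ S ∈ Finset.univ.filter (fun S : Finset (Fin d) => S.card ≤ d0 ∧ ¬ S ⊆ J), F S
      ≤ ∑ i ∈ Finset.univ.filter (fun i : Fin d => i ∉ J),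
          ∑ S ∈ Finset.univ.filter (fun S : Finset (Fin d) => i ∈ S ∧ S.card ≤ d0), F S := by
  have step1 : ∑ S ∈ Finset.univ.filter (fun S : Finset (Fin d) => S.card ≤ d0 ∧ ¬ S ⊆ J), F S
      ≤ ∑ S ∈ Finset.univ.filter (fun S : Finset (Fin d) => S.card ≤ d0 ∧ ¬ S ⊆ J),
          ∑ i ∈ Finset.univ.filter (fun i : Fin d => i ∉ J),
            (if i ∈ S then F S else 0) := by
    refine Finset.sum_le_sum fun S hS => ?_
    simp only [Finset.mem_filter, Finset.mem_univ, true_and] at hS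
    obtain ⟨i0, hi0S, hi0J⟩ := Finset.not_subset.mp hS.2
    have hmem : i0 ∈ Finset.univ.filter (fun i : Fin d => i ∉ J) := by
      simp [hi0J]
    have := Finset.single_le_sum
      (f := fun i : Fin d => if i ∈ S then F S else 0)
      (fun i _ => by by_cases h : i ∈ S <;> simp [h, hF S]) hmem
    simp only [if_pos hi0S] at this
    exact this
  refine le_trans step1 ?_
  rw [Finset.sum_comm]
  refine Finset.sum_le_sum fun i _ => ?_
  rw [← Finset.sum_filter]
  apply Finset.sum_le_sum_of_subset_of_nonneg
  · intro S hS
    simp only [Finset.mem_filter, Finset.mem_univ, true_and] at hS ⊢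
    exact ⟨hS.2, hS.1.1⟩
  · intro S _ _
    exact hF S

theorem stmt12 (d : ℕ) (f : (Fin d → Bool) → ℝ) (K δ : ℝ) (d0 : ℕ)
    (hf : ∀ x, f x ∈ Set.Icc (0 : ℝ) 1) (hmono : BMono d f)
    (hI : (∑ i : Fin d, unifE d (fun x => disc d f i x)) ≤ K)
    (hd0 : 1 ≤ d0) (hδ : 0 < δ) :
    (∑ S ∈ Finset.univ.filter (fun S : Finset (Fin d) =>
        ¬(S ⊆ Finset.univ.filter (fun i : Fin d => δ ≤ unifE d (fun x => disc d f i x)) ∧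
          S.card ≤ d0)), (fhat d f S) ^ 2) ≤
      (∑ i : Fin d, unifE d (fun x => (disc d f i x) ^ 2)) / (4 * d0)
        + K * 3 ^ d0 * Real.sqrt δ / 12 := by
  classical
  set J : Finset (Fin d) :=
    Finset.univ.filter (fun i : Fin d => δ ≤ unifE d (fun x => disc d f i x)) with hJ
  set Ii : Fin d → ℝ := fun i => unifE d (fun x => disc d f i x) with hIi
  have hIi0 : ∀ i, 0 ≤ Ii i := by
    intro i
    have h1 : 0 ≤ ∑ x : Fin d → Bool, disc d f i x :=
      Finset.sum_nonneg fun x _ => disc_nonneg hmono i x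
    exact div_nonneg h1 (le_of_lt two_pow_pos)
  -- split the sum
  have hsplit : Finset.univ.filter (fun S : Finset (Fin d) => ¬(S ⊆ J ∧ S.card ≤ d0))
      = Finset.univ.filter (fun S : Finset (Fin d) => d0 < S.card)
        ∪ Finset.univ.filter (fun S : Finset (Fin d) => S.card ≤ d0 ∧ ¬ S ⊆ J) := by
    ext S
    simp only [Finset.mem_filter, Finset.mem_union, Finset.mem_univ, true_and]
    constructor
    · intro h
      by_cases hc : S.card ≤ d0
      · exact Or.inr ⟨hc, fun hsub => h ⟨hsub, hc⟩⟩
      · exact Or.inl (by omega)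
    · rintro (h | ⟨h1, h2⟩) ⟨hsub, hcard⟩
      · omega
      · exact h2 hsub
  have hdisj : Disjoint (Finset.univ.filter (fun S : Finset (Fin d) => d0 < S.card))
      (Finset.univ.filter (fun S : Finset (Fin d) => S.card ≤ d0 ∧ ¬ S ⊆ J)) := by
    rw [Finset.disjoint_left]
    intro S h1 h2
    simp only [Finset.mem_filter, Finset.mem_univ, true_and] at h1 h2
    omega
  rw [hsplit, Finset.sum_union hdisj]
  have hpart1 := part1 f d0 hd0
  -- part 2
  have hperi : ∀ i ∈ Finset.univ.filter (fun i : Fin d => i ∉ J),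
      ∑ S ∈ Finset.univ.filter (fun S : Finset (Fin d) => i ∈ S ∧ S.card ≤ d0),
          (fhat d f S) ^ 2
        ≤ (3:ℝ) ^ (d0 - 1) / 4 * Real.sqrt δ * Ii i := by
    intro i hi
    simp only [hJ, Finset.mem_filter, Finset.mem_univ, true_and, not_le] at hi
    have hlt : Ii i < δ := hi
    have h1 := partB_per_i f i d0 hd0
    have h2 := noise_bound (d := d) (disc d f i)
      (fun x => ⟨disc_nonneg hmono i x, disc_le_one hf i x⟩)
    have h3 : unifE d (disc d f i) = Ii i := rfl
    rw [h3] at h2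
    have h4 : Ii i * Real.sqrt (Ii i) ≤ Real.sqrt δ * Ii i := by
      rw [mul_comm]
      exact mul_le_mul_of_nonneg_right
        (Real.sqrt_le_sqrt (le_of_lt hlt)) (hIi0 i)
    have h5 : (0:ℝ) ≤ (3:ℝ) ^ (d0 - 1) / 4 := by positivity
    calc (∑ S ∈ Finset.univ.filter (fun S : Finset (Fin d) => i ∈ S ∧ S.card ≤ d0),
            (fhat d f S) ^ 2)
        ≤ (3:ℝ) ^ (d0 - 1) / 4 *
            ∑ T : Finset (Fin d), (3:ℝ)⁻¹ ^ T.card * (fhat d (disc d f i) T) ^ 2 := h1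
      _ ≤ (3:ℝ) ^ (d0 - 1) / 4 * (Ii i * Real.sqrt (Ii i)) :=
          mul_le_mul_of_nonneg_left h2 h5
      _ ≤ (3:ℝ) ^ (d0 - 1) / 4 * (Real.sqrt δ * Ii i) :=
          mul_le_mul_of_nonneg_left h4 h5
      _ = (3:ℝ) ^ (d0 - 1) / 4 * Real.sqrt δ * Ii i := by ring
  have hpart2 : ∑ S ∈ Finset.univ.filter
        (fun S : Finset (Fin d) => S.card ≤ d0 ∧ ¬ S ⊆ J), (fhat d f S) ^ 2
      ≤ K * 3 ^ d0 * Real.sqrt δ / 12 := by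
    have hc := part2_count (fun S => (fhat d f S) ^ 2) (fun S => sq_nonneg _) J d0
    have hsum : ∑ i ∈ Finset.univ.filter (fun i : Fin d => i ∉ J),
          ∑ S ∈ Finset.univ.filter (fun S : Finset (Fin d) => i ∈ S ∧ S.card ≤ d0),
            (fhat d f S) ^ 2
        ≤ ∑ i ∈ Finset.univ.filter (fun i : Fin d => i ∉ J),
            (3:ℝ) ^ (d0 - 1) / 4 * Real.sqrt δ * Ii i :=
      Finset.sum_le_sum hperi
    have hIsum : ∑ i ∈ Finset.univ.filter (fun i : Fin d => i ∉ J), Ii i ≤ K := by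
      refine le_trans ?_ hI
      apply Finset.sum_le_sum_of_subset_of_nonneg (Finset.filter_subset _ _)
      intro i _ _
      exact hIi0 i
    have hcoef : (0:ℝ) ≤ (3:ℝ) ^ (d0 - 1) / 4 * Real.sqrt δ := by positivity
    have hfinal : ∑ i ∈ Finset.univ.filter (fun i : Fin d => i ∉ J),
          (3:ℝ) ^ (d0 - 1) / 4 * Real.sqrt δ * Ii i
        ≤ (3:ℝ) ^ (d0 - 1) / 4 * Real.sqrt δ * K := by
      rw [← Finset.mul_sum]
      exact mul_le_mul_of_nonneg_left hIsum hcoef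
    have harith : (3:ℝ) ^ (d0 - 1) / 4 * Real.sqrt δ * K
        = K * 3 ^ d0 * Real.sqrt δ / 12 := by
      have hpow : (3:ℝ) ^ d0 = 3 ^ (d0 - 1) * 3 := by
        rw [← pow_succ]
        congr 1
        omega
      rw [hpow]
      ring
    calc (∑ S ∈ Finset.univ.filter
          (fun S : Finset (Fin d) => S.card ≤ d0 ∧ ¬ S ⊆ J), (fhat d f S) ^ 2)
        ≤ _ := hc
      _ ≤ _ := hsum
      _ ≤ (3:ℝ) ^ (d0 - 1) / 4 * Real.sqrt δ * K := hfinal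
      _ = K * 3 ^ d0 * Real.sqrt δ / 12 := harith
  exact add_le_add hpart1 hpart2
end

section
/- In the middle-layer construction, for every coordinate i ∈ S_0 the L1-influence satisfies I_i(f_ω) ≤ β · binom(s, m) / 2^{s-1}, and I_i(f_ω) = 0 for i ∉ S_0; hence the total L1-influence satisfies I(f_ω) ≤ β · s · binom(s, m) / 2^{s-1}. -/
open Finset

/-- Restriction of `x : {0,1}^d` to the coordinates in `S0`. -/
def restr (d : ℕ) (S0 : Finset (Fin d)) (x : Fin d → Bool) : {i // i ∈ S0} → Bool :=
  fun i => x i.1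

/-- Hamming weight of a point of `{0,1}^{S0}`. -/
def wt (d : ℕ) (S0 : Finset (Fin d)) (z : {i // i ∈ S0} → Bool) : ℕ :=
  (Finset.univ.filter (fun i : {i // i ∈ S0} => z i = true)).card

/-- The middle-layer function `f_ω`. -/
noncomputable def fom (d : ℕ) (S0 : Finset (Fin d)) (β : ℝ) (m : ℕ)
    (ω : ({i // i ∈ S0} → Bool) → Bool) (x : Fin d → Bool) : ℝ :=
  if wt d S0 (restr d S0 x) < m then 0
  else if wt d S0 (restr d S0 x) = m then β * (if ω (restr d S0 x) then 1 else 0)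
  else β

/-! ### Auxiliary lemmas -/

lemma aux_sum_bool_indicator (α : Type*) [Fintype α] [DecidableEq α] (m : ℕ) :
    ∑ z : α → Bool, (if (Finset.univ.filter (fun a => z a = true)).card = m then (1:ℝ) else 0)
      = (Fintype.card α).choose m := by
  rw [Finset.sum_boole]
  norm_cast
  rw [← Finset.card_univ (α := α), ← Finset.card_powersetCard]
  refine Finset.card_nbij' (fun z => Finset.univ.filter (fun a => z a = true))
      (fun S => fun a => decide (a ∈ S)) ?hi ?hj ?li ?ri
  case hi =>
    intro z hz
    simp only [Finset.mem_coe, Finset.mem_filter, Finset.mem_univ, true_and] at hz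
    simp [Finset.mem_powersetCard, hz]
  case hj =>
    intro S hS
    simp only [Finset.mem_coe, Finset.mem_powersetCard] at hS
    simp only [Finset.mem_coe, Finset.mem_filter, Finset.mem_univ, true_and]
    rw [← hS.2]
    congr 1
    ext a
    simp
  case li =>
    intro z hz
    funext a
    simp
  case ri =>
    intro S hS
    ext a
    simp

lemma aux_count_wt (d m : ℕ) (S0 : Finset (Fin d)) :
    ∑ x : Fin d → Bool, (if wt d S0 (restr d S0 x) = m then (1:ℝ) else 0)
      = (S0.card.choose m) * 2 ^ (d - S0.card) := by
  classical
  set p : Fin d → Prop := fun i => i ∈ S0 with hp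
  set E : (Fin d → Bool) ≃ ({i // p i} → Bool) × ({i // ¬ p i} → Bool) :=
    ((Equiv.sumCompl p).symm.arrowCongr (Equiv.refl Bool)).trans
      (Equiv.sumArrowEquivProdArrow _ _ Bool) with hEdef
  have hrestr : ∀ zw : ({i // p i} → Bool) × ({i // ¬ p i} → Bool),
      restr d S0 (E.symm zw) = zw.1 := by
    rintro ⟨z, w⟩
    funext j
    show (E.symm (z, w)) j.1 = z j
    simp only [hEdef, Equiv.symm_trans_apply, Equiv.arrowCongr_symm, Equiv.symm_symm,
      Equiv.arrowCongr_apply, Equiv.refl_symm, Function.comp_apply, Equiv.refl_apply]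
    rw [Equiv.sumCompl_symm_apply_of_pos (p := p) j.2]
    rfl
  rw [← E.symm.sum_comp (g := fun x => if wt d S0 (restr d S0 x) = m then (1:ℝ) else 0)]
  simp only [hrestr]
  rw [Fintype.sum_prod_type]
  have h1 : ∀ z : {i // p i} → Bool,
      ∑ _w : {i // ¬ p i} → Bool, (if wt d S0 z = m then (1:ℝ) else 0)
        = (if wt d S0 z = m then (1:ℝ) else 0) * 2 ^ (d - S0.card) := by
    intro z
    rw [Finset.sum_const, Finset.card_univ, Fintype.card_fun]
    have : Fintype.card {i // ¬ p i} = d - S0.card := by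
      rw [Fintype.card_subtype]
      rw [show Finset.univ.filter (fun x => ¬ p x) = S0ᶜ by ext a; simp [hp]]
      rw [Finset.card_compl]
      simp
    rw [this]
    simp [nsmul_eq_mul, mul_comm]
  simp only [h1]
  rw [← Finset.sum_mul]
  congr 1
  have h2 := aux_sum_bool_indicator {i // p i} m
  unfold wt
  rw [h2]
  congr 1
  simp [hp]

lemma aux_sum_update_eq (d : ℕ) (i : Fin d) (b : Bool) (F : (Fin d → Bool) → ℝ) :
    ∑ x : Fin d → Bool, F (Function.update x i b)
      = 2 * ∑ x : Fin d → Bool, (if x i = b then F x else 0) := by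
  set E := Equiv.funSplitAt i Bool with hE
  have key : ∀ (c : Bool) (g : { j // j ≠ i } → Bool),
      Function.update (E.symm (c, g)) i b = E.symm (b, g) := by
    intro c g
    funext j
    by_cases h : j = i
    · subst h; simp [hE, Equiv.funSplitAt, Equiv.piSplitAt]
    · simp [Function.update_of_ne h, hE, Equiv.funSplitAt, Equiv.piSplitAt, h]
  have hval : ∀ (c : Bool) (g : { j // j ≠ i } → Bool), (E.symm (c, g)) i = c := by
    intro c g; simp [hE, Equiv.funSplitAt, Equiv.piSplitAt]
  rw [← E.symm.sum_comp (g := fun x => F (Function.update x i b)),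
      ← E.symm.sum_comp (g := fun x => if x i = b then F x else 0)]
  simp only [Fintype.sum_prod_type]
  calc ∑ c : Bool, ∑ g : { j // j ≠ i } → Bool, F (Function.update (E.symm (c, g)) i b)
      = ∑ c : Bool, ∑ g : { j // j ≠ i } → Bool, F (E.symm (b, g)) := by
        simp only [key]
    _ = 2 * ∑ g : { j // j ≠ i } → Bool, F (E.symm (b, g)) := by
        simp [two_mul]
    _ = 2 * ∑ c : Bool, ∑ g : { j // j ≠ i } → Bool,
          (if (E.symm (c, g)) i = b then F (E.symm (c, g)) else 0) := by
        congr 1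
        simp only [hval]
        rw [Finset.sum_comm]
        congr 1
        funext g
        rw [Finset.sum_ite_eq' Finset.univ b (fun c => F (E.symm (c, g)))]
        simp

lemma aux_restr_update_not_mem (d : ℕ) (S0 : Finset (Fin d)) (i : Fin d) (hi : i ∉ S0)
    (x : Fin d → Bool) (b : Bool) :
    restr d S0 (Function.update x i b) = restr d S0 x := by
  funext j
  have : j.1 ≠ i := fun h => hi (h ▸ j.2)
  simp [restr, Function.update_of_ne this]

lemma aux_fom_nonneg (d : ℕ) (S0 : Finset (Fin d)) (β : ℝ) (m : ℕ)
    (ω : ({i // i ∈ S0} → Bool) → Bool)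
    (hβ0 : 0 ≤ β) (x : Fin d → Bool) : 0 ≤ fom d S0 β m ω x := by
  unfold fom; split_ifs <;> positivity

lemma aux_fom_le (d : ℕ) (S0 : Finset (Fin d)) (β : ℝ) (m : ℕ)
    (ω : ({i // i ∈ S0} → Bool) → Bool)
    (hβ0 : 0 ≤ β) (x : Fin d → Bool) : fom d S0 β m ω x ≤ β := by
  unfold fom
  split_ifs <;> simp [hβ0]

lemma aux_wt_update_succ (d : ℕ) (S0 : Finset (Fin d)) (i : Fin d) (hi : i ∈ S0)
    (x : Fin d → Bool) :
    wt d S0 (restr d S0 (Function.update x i true))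
      = wt d S0 (restr d S0 (Function.update x i false)) + 1 := by
  classical
  unfold wt
  have key : (Finset.univ.filter
      (fun j : {k // k ∈ S0} => restr d S0 (Function.update x i true) j = true))
      = insert ⟨i, hi⟩ (Finset.univ.filter
        (fun j : {k // k ∈ S0} => restr d S0 (Function.update x i false) j = true)) := by
    ext j
    by_cases h : j.1 = i
    · have hj : j = ⟨i, hi⟩ := Subtype.ext h
      subst hj
      rw [Finset.mem_filter, Finset.mem_insert, Finset.mem_filter]
      simp [restr]
    · rw [Finset.mem_filter, Finset.mem_insert, Finset.mem_filter]
      simp only [Finset.mem_filter, Finset.mem_univ, true_and, Finset.mem_insert, restr,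
        Function.update_of_ne h]
      constructor
      · intro hx; exact Or.inr hx
      · rintro (hj | hx)
        · exact absurd (congrArg Subtype.val hj) h
        · exact hx
  rw [key, Finset.card_insert_of_notMem]
  rw [Finset.mem_filter]
  simp [restr]

lemma aux_disc_fom_le (d m : ℕ) (S0 : Finset (Fin d)) (β : ℝ) (hβ0 : 0 ≤ β)
    (ω : ({i // i ∈ S0} → Bool) → Bool) (i : Fin d) (hi : i ∈ S0) (x : Fin d → Bool) :
    disc d (fom d S0 β m ω) i x ≤
      β * ((if wt d S0 (restr d S0 (Function.update x i true)) = m then (1:ℝ) else 0)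
         + (if wt d S0 (restr d S0 (Function.update x i false)) = m then (1:ℝ) else 0)) := by
  have hAB := aux_wt_update_succ d S0 i hi x
  set A := wt d S0 (restr d S0 (Function.update x i true)) with hA
  set B := wt d S0 (restr d S0 (Function.update x i false)) with hB
  unfold disc
  by_cases hBm : B = m
  · have hAm : A ≠ m := by omega
    rw [if_neg hAm, if_pos hBm]
    have h1 : fom d S0 β m ω (Function.update x i true) ≤ β :=
      aux_fom_le d S0 β m ω hβ0 _
    have h2 : 0 ≤ fom d S0 β m ω (Function.update x i false) :=
      aux_fom_nonneg d S0 β m ω hβ0 _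
    nlinarith
  · by_cases hAm : A = m
    · rw [if_pos hAm, if_neg hBm]
      have h1 : fom d S0 β m ω (Function.update x i true) ≤ β :=
        aux_fom_le d S0 β m ω hβ0 _
      have h2 : 0 ≤ fom d S0 β m ω (Function.update x i false) :=
        aux_fom_nonneg d S0 β m ω hβ0 _
      nlinarith
    · rw [if_neg hAm, if_neg hBm]
      rcases lt_or_ge A m with h | h
      · have hBlt : B < m := by omega
        unfold fom
        rw [if_pos h, if_pos hBlt]
        simp
      · have hAgt : ¬ A < m := by omega
        have hBge : ¬ B < m := by omega
        unfold fom
        rw [if_neg hAgt, if_neg hBge, if_neg hAm, if_neg hBm]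
        simp

theorem stmt17 (d s : ℕ) (S0 : Finset (Fin d)) (β : ℝ)
    (ω : ({i // i ∈ S0} → Bool) → Bool)
    (hs : 2 ≤ s) (hcard : S0.card = s) (hβ : β ∈ Set.Icc (0 : ℝ) 1) :
    (∀ i ∈ S0, unifE d (fun x => disc d (fom d S0 β (s / 2) ω) i x) ≤
        β * (s.choose (s / 2)) / 2 ^ (s - 1)) ∧
    (∀ i ∉ S0, unifE d (fun x => disc d (fom d S0 β (s / 2) ω) i x) = 0) ∧
    (∑ i : Fin d, unifE d (fun x => disc d (fom d S0 β (s / 2) ω) i x)) ≤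
      β * s * (s.choose (s / 2)) / 2 ^ (s - 1) := by
  obtain ⟨hβ0, hβ1⟩ := hβ
  set m := s / 2 with hm
  have hds : s ≤ d := by
    rw [← hcard]
    simpa using Finset.card_le_univ S0
  -- the "It" indicator
  set It : (Fin d → Bool) → ℝ :=
    fun x => if wt d S0 (restr d S0 x) = m then (1:ℝ) else 0 with hIt
  have hpart2 : ∀ i ∉ S0, unifE d (fun x => disc d (fom d S0 β m ω) i x) = 0 := by
    intro i hi
    have hzero : ∀ x, disc d (fom d S0 β m ω) i x = 0 := by
      intro x
      unfold disc fom
      rw [aux_restr_update_not_mem d S0 i hi x true, aux_restr_update_not_mem d S0 i hi x false]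
      ring
    unfold unifE
    simp [hzero]
  have hpart1 : ∀ i ∈ S0, unifE d (fun x => disc d (fom d S0 β m ω) i x) ≤
      β * (s.choose m) / 2 ^ (s - 1) := by
    intro i hi
    have hItsum : ∑ x : Fin d → Bool, It x = (s.choose m) * 2 ^ (d - s) := by
      rw [hIt]
      rw [aux_count_wt d m S0, hcard]
    have hsum : (∑ x : Fin d → Bool, disc d (fom d S0 β m ω) i x)
        ≤ β * (2 * ((s.choose m) * 2 ^ (d - s))) := by
      calc (∑ x : Fin d → Bool, disc d (fom d S0 β m ω) i x)
          ≤ ∑ x : Fin d → Bool,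
            β * (It (Function.update x i true) + It (Function.update x i false)) :=
            Finset.sum_le_sum (fun x _ => aux_disc_fom_le d m S0 β hβ0 ω i hi x)
        _ = β * ((∑ x : Fin d → Bool, It (Function.update x i true))
              + (∑ x : Fin d → Bool, It (Function.update x i false))) := by
            rw [← Finset.mul_sum, Finset.sum_add_distrib]
        _ = β * (2 * (∑ x : Fin d → Bool, (if x i = true then It x else 0))
              + 2 * (∑ x : Fin d → Bool, (if x i = false then It x else 0))) := by
            rw [aux_sum_update_eq, aux_sum_update_eq]
        _ = β * (2 * ∑ x : Fin d → Bool,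
              ((if x i = true then It x else 0) + (if x i = false then It x else 0))) := by
            rw [Finset.sum_add_distrib]; ring
        _ = β * (2 * ∑ x : Fin d → Bool, It x) := by
            congr 2
            apply Finset.sum_congr rfl
            intro x _
            cases h : x i <;> simp [h]
        _ = β * (2 * ((s.choose m) * 2 ^ (d - s))) := by rw [hItsum]
    have h2d : (0:ℝ) < 2 ^ d := by positivity
    have hpow : (2:ℝ) ^ d = 2 ^ (d - s) * 2 ^ (s - 1) * 2 := by
      have hd : d = (d - s) + (s - 1) + 1 := by omega
      calc (2:ℝ) ^ d = 2 ^ ((d - s) + (s - 1) + 1) := by rw [← hd]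
        _ = 2 ^ (d - s) * 2 ^ (s - 1) * 2 := by rw [pow_add, pow_add, pow_one]
    have heq : β * (s.choose m) / 2 ^ (s - 1)
        = β * (2 * ((s.choose m) * 2 ^ (d - s))) / 2 ^ d := by
      rw [hpow]
      have h1 : (0:ℝ) < 2 ^ (s - 1) := by positivity
      have h2 : (0:ℝ) < 2 ^ (d - s) := by positivity
      field_simp
    rw [heq]
    unfold unifE
    exact div_le_div_of_nonneg_right hsum h2d.le
  refine ⟨hpart1, hpart2, ?_⟩
  have hsumeq : (∑ i : Fin d, unifE d (fun x => disc d (fom d S0 β m ω) i x))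
      = ∑ i ∈ S0, unifE d (fun x => disc d (fom d S0 β m ω) i x) :=
    (Finset.sum_subset (Finset.subset_univ S0) (fun i _ hi => hpart2 i hi)).symm
  rw [hsumeq]
  calc (∑ i ∈ S0, unifE d (fun x => disc d (fom d S0 β m ω) i x))
      ≤ ∑ _i ∈ S0, (β * (s.choose m) / 2 ^ (s - 1)) :=
        Finset.sum_le_sum (fun i hi => hpart1 i hi)
    _ = s * (β * (s.choose m) / 2 ^ (s - 1)) := by
        rw [Finset.sum_const, hcard, nsmul_eq_mul]
    _ = β * s * (s.choose m) / 2 ^ (s - 1) := by ring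
end
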